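/- arXiv:1901.08268 — 8 statements merged into one kernel-verified Lean document; each statement's English description precedes it below -/
import Mathlib

section
/- For α > 0 and β > -1, the left nabla fractional sum of the rising function satisfies (ₐ∇^{-α} (t-a)^{\overline{β}}) = (Γ(β+1)/Γ(β+1+α)) · (t-a)^{\overline{α+β}} for t ∈ ℕ_{a+1}. -/
noncomputable def rising (x mu : ℝ) : ℝ :=
  if mu = 0 then 1 else Real.Gamma (x + mu) / Real.Gamma x

/-- Left nabla fractional sum of order `mu` starting at `a`, for a function on
`ℕ_a` represented as a sequence `f : ℕ → ℝ` with `f j = f(a + j)`; the value is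
taken at the point `z = a + n`. By convention the sum of order `0` is the identity. -/
noncomputable def nablaSumL (mu : ℝ) (f : ℕ → ℝ) (n : ℕ) : ℝ :=
  if mu = 0 then f n
  else (1 / Real.Gamma mu) *
    ∑ j ∈ Finset.Icc 1 n, rising ((n : ℝ) - (j : ℝ) + 1) (mu - 1) * f j

/-- Right nabla fractional sum of order `mu` ending at `b`, for a function on
`_bℕ` represented as a sequence `g : ℕ → ℝ` with `g i = g(b - i)`; the value is
taken at the point `z = b - m`. -/
noncomputable def nablaSumR (mu : ℝ) (g : ℕ → ℝ) (m : ℕ) : ℝ :=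
  if mu = 0 then g m
  else (1 / Real.Gamma mu) *
    ∑ i ∈ Finset.Icc 1 m, rising ((m : ℝ) - (i : ℝ) + 1) (mu - 1) * g i


open Finset

noncomputable def ascR (x : ℝ) (k : ℕ) : ℝ := ∏ i ∈ Finset.range k, (x + i)

lemma ascR_zero (x : ℝ) : ascR x 0 = 1 := by simp [ascR]

lemma ascR_succ (x : ℝ) (k : ℕ) : ascR x (k + 1) = ascR x k * (x + k) := by
  simp [ascR, Finset.prod_range_succ]

lemma Gamma_add_nat {x : ℝ} (hx : 0 < x) (k : ℕ) :
    Real.Gamma (x + k) = ascR x k * Real.Gamma x := by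
  induction k with
  | zero => simp [ascR_zero]
  | succ k ih =>
    have h1 : x + (k + 1 : ℕ) = (x + k) + 1 := by push_cast; ring
    rw [h1, Real.Gamma_add_one (by positivity), ih, ascR_succ]
    ring

lemma vand (m : ℕ) (x y : ℝ) :
    ∑ i ∈ Finset.range (m + 1), (m.choose i : ℝ) * ascR x (m - i) * ascR y i
      = ascR (x + y) m := by
  induction m generalizing x y with
  | zero => simp [ascR_zero]
  | succ m ih =>
    rw [Finset.sum_range_succ']
    have hf : ∀ i ∈ Finset.range (m + 1),
        ((m+1).choose (i+1) : ℝ) * ascR x (m + 1 - (i+1)) * ascR y (i+1)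
          = (m.choose (i+1) : ℝ) * ascR x (m - i) * ascR y (i+1)
            + (m.choose i : ℝ) * ascR x (m - i) * ascR y i * (y + i) := by
      intro i hi
      rw [Nat.choose_succ_succ]
      have : m + 1 - (i + 1) = m - i := by omega
      rw [this, ascR_succ]
      push_cast
      ring
    rw [Finset.sum_congr rfl hf, Finset.sum_add_distrib]
    have h1 : (∑ i ∈ Finset.range (m + 1),
          (m.choose (i+1) : ℝ) * ascR x (m - i) * ascR y (i+1)) + ascR x (m+1)
        = ∑ i ∈ Finset.range (m + 1),
          (m.choose i : ℝ) * ascR x (m - i) * ascR y i * (x + ((m - i : ℕ) : ℝ)) := by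
      rw [Finset.sum_range_succ, Finset.sum_range_succ']
      have hterm : ∀ i ∈ Finset.range m,
          (m.choose (i+1) : ℝ) * ascR x (m - i) * ascR y (i+1)
            = (m.choose (i+1) : ℝ) * ascR x (m - (i+1)) * ascR y (i+1)
                * (x + ((m - (i+1) : ℕ) : ℝ)) := by
        intro i hi
        have hlt : i < m := Finset.mem_range.mp hi
        have h2 : m - i = (m - (i+1)) + 1 := by omega
        rw [h2, ascR_succ]
        ring
      rw [Finset.sum_congr rfl hterm]
      simp [Nat.choose_succ_self, ascR_succ, ascR_zero]
    have h0 : ((m+1).choose 0 : ℝ) * ascR x (m + 1 - 0) * ascR y 0 = ascR x (m+1) := by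
      simp [ascR_zero]
    rw [h0]
    have step : (∑ i ∈ Finset.range (m + 1),
          (m.choose (i+1) : ℝ) * ascR x (m - i) * ascR y (i+1))
        + (∑ i ∈ Finset.range (m + 1),
          (m.choose i : ℝ) * ascR x (m - i) * ascR y i * (y + i))
        + ascR x (m+1)
        = ∑ i ∈ Finset.range (m + 1),
          (m.choose i : ℝ) * ascR x (m - i) * ascR y i * (x + y + m) := by
      rw [add_right_comm, h1, ← Finset.sum_add_distrib]
      apply Finset.sum_congr rfl
      intro i hi
      have hle : i ≤ m := by simpa [Nat.lt_succ_iff] using hi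
      have : ((m - i : ℕ) : ℝ) = (m : ℝ) - i := Nat.cast_sub hle
      rw [this]
      ring
    rw [step, ← Finset.sum_mul, ih, ascR_succ]

lemma vand_div (m : ℕ) (x y : ℝ) :
    ∑ i ∈ Finset.range (m + 1),
        ascR x (m - i) / (m - i).factorial * (ascR y i / i.factorial)
      = ascR (x + y) m / m.factorial := by
  rw [← vand m x y, Finset.sum_div]
  apply Finset.sum_congr rfl
  intro i hi
  have hle : i ≤ m := by simpa [Nat.lt_succ_iff] using hi
  rw [Nat.cast_choose ℝ hle]
  have h1 : (i.factorial : ℝ) ≠ 0 := by positivity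
  have h2 : ((m - i).factorial : ℝ) ≠ 0 := by positivity
  have h3 : (m.factorial : ℝ) ≠ 0 := by positivity
  field_simp

lemma rising_pos_eq {x : ℝ} (hx : 0 < x) (μ : ℝ) :
    rising x μ = Real.Gamma (x + μ) / Real.Gamma x := by
  unfold rising
  split_ifs with h
  · rw [h, add_zero, div_self (Real.Gamma_pos_of_pos hx).ne']
  · rfl

/-- Power rule for the left nabla fractional sum: for `α > 0`, `β > -1`, and
`t = a + n ∈ ℕ_{a+1}`, one has
`(ₐ∇^{-α}(·-a)^β‾)(t) = (Γ(β+1)/Γ(β+1+α)) (t-a)^(α+β)‾`.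
The function `s ↦ (s-a)^β‾` on `ℕ_a` is the sequence `j ↦ j^β‾`, and `t - a = n`. -/

theorem nablaSumL_rising (α β : ℝ) (hα : 0 < α) (hβ : -1 < β) (n : ℕ) (hn : 1 ≤ n) :
    nablaSumL α (fun j => rising (j : ℝ) β) n
      = (Real.Gamma (β + 1) / Real.Gamma (β + 1 + α)) * rising (n : ℝ) (α + β) := by
  have hβ1 : (0 : ℝ) < β + 1 := by linarith
  have hαβ1 : (0 : ℝ) < α + β + 1 := by linarith
  have gA : (0 : ℝ) < Real.Gamma α := Real.Gamma_pos_of_pos hα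
  have gB : (0 : ℝ) < Real.Gamma (β + 1) := Real.Gamma_pos_of_pos hβ1
  have gC : (0 : ℝ) < Real.Gamma (α + β + 1) := Real.Gamma_pos_of_pos hαβ1
  unfold nablaSumL
  rw [if_neg hα.ne']
  have hterm : ∀ j ∈ Finset.Icc 1 n,
      rising ((n : ℝ) - (j : ℝ) + 1) (α - 1) * rising (j : ℝ) β
        = Real.Gamma α * Real.Gamma (β + 1) *
            (ascR α (n - j) / (n - j).factorial *
              (ascR (β + 1) (j - 1) / (j - 1).factorial)) := by
    intro j hj
    obtain ⟨hj1, hj2⟩ := Finset.mem_Icc.mp hj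
    have hcast1 : ((n - j : ℕ) : ℝ) = (n : ℝ) - j := Nat.cast_sub hj2
    have hcast2 : ((j - 1 : ℕ) : ℝ) = (j : ℝ) - 1 := by
      rw [Nat.cast_sub hj1, Nat.cast_one]
    have hx1 : (0 : ℝ) < (n : ℝ) - j + 1 := by
      rw [← hcast1]; positivity
    have hx2 : (0 : ℝ) < (j : ℝ) := by exact_mod_cast hj1
    rw [rising_pos_eq hx1, rising_pos_eq hx2]
    have e1 : (n : ℝ) - j + 1 + (α - 1) = α + ((n - j : ℕ) : ℝ) := by
      rw [hcast1]; ring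
    have e2 : (n : ℝ) - j + 1 = ((n - j : ℕ) : ℝ) + 1 := by rw [hcast1]
    have e3 : (j : ℝ) + β = (β + 1) + ((j - 1 : ℕ) : ℝ) := by rw [hcast2]; ring
    have e4 : (j : ℝ) = ((j - 1 : ℕ) : ℝ) + 1 := by rw [hcast2]; ring
    rw [e1, e2, e3, Gamma_add_nat hα, Gamma_add_nat hβ1, Real.Gamma_nat_eq_factorial]
    rw [show Real.Gamma (j : ℝ) = ((j - 1).factorial : ℝ) by
      rw [e4, Real.Gamma_nat_eq_factorial]]
    ring
  rw [Finset.sum_congr rfl hterm, ← Finset.mul_sum]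
  have hre : ∑ j ∈ Finset.Icc 1 n,
      (ascR α (n - j) / (n - j).factorial * (ascR (β + 1) (j - 1) / (j - 1).factorial))
      = ascR (α + β + 1) (n - 1) / (n - 1).factorial := by
    obtain ⟨m, rfl⟩ : ∃ m, n = m + 1 := ⟨n - 1, by omega⟩
    have hrange : Finset.Icc 0 m = Finset.range (m + 1) := by
      ext i; simp [Nat.lt_succ_iff]
    have hmap : Finset.Icc 1 (m + 1) = (Finset.range (m + 1)).map (addLeftEmbedding 1) := by
      rw [← hrange, Finset.map_add_left_Icc]
      congr 1; omega
    rw [hmap, Finset.sum_map]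
    have hstep : ∀ i ∈ Finset.range (m + 1),
        ascR α (m + 1 - addLeftEmbedding 1 i) / (m + 1 - addLeftEmbedding 1 i).factorial *
          (ascR (β + 1) (addLeftEmbedding 1 i - 1) / (addLeftEmbedding 1 i - 1).factorial)
        = ascR α (m - i) / (m - i).factorial * (ascR (β + 1) i / i.factorial) := by
      intro i hi
      have h1 : addLeftEmbedding 1 i = 1 + i := rfl
      have h2 : m + 1 - (1 + i) = m - i := by omega
      have h3 : 1 + i - 1 = i := by omega
      rw [h1, h2, h3]
    rw [Finset.sum_congr rfl hstep, vand_div m α (β + 1),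
      show α + (β + 1) = α + β + 1 by ring, Nat.add_sub_cancel]
  rw [hre]
  have hx : (0 : ℝ) < (n : ℝ) := by exact_mod_cast hn
  rw [rising_pos_eq hx]
  have hc : ((n - 1 : ℕ) : ℝ) = (n : ℝ) - 1 := by rw [Nat.cast_sub hn, Nat.cast_one]
  have e5 : (n : ℝ) + (α + β) = (α + β + 1) + ((n - 1 : ℕ) : ℝ) := by
    rw [hc]; ring
  have e6 : Real.Gamma (n : ℝ) = ((n - 1).factorial : ℝ) := by
    have : (n : ℝ) = ((n - 1 : ℕ) : ℝ) + 1 := by rw [hc]; ring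
    rw [this, Real.Gamma_nat_eq_factorial]
  rw [e5, e6, Gamma_add_nat hαβ1]
  have e7 : β + 1 + α = α + β + 1 := by ring
  rw [e7]
  have hfac : ((n - 1).factorial : ℝ) ≠ 0 := by positivity
  field_simp
end

section
/- The left nabla fractional sums satisfy the semigroup property: for α, μ > 0 and any function f on ℕ_a, (ₐ∇^{-α}(ₐ∇^{-μ}f))(v) = (ₐ∇^{-(α+μ)}f)(v) for all v ∈ ℕ_{a+1}. -/
noncomputable def acoef (t : ℝ) (k : ℕ) : ℝ :=
  Real.Gamma ((k : ℝ) + t) / (Real.Gamma t * (k.factorial : ℝ))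

lemma acoef_zero (t : ℝ) (ht : Real.Gamma t ≠ 0) : acoef t 0 = 1 := by
  simp [acoef, div_self ht]

lemma acoef_succ (t : ℝ) (ht : 0 < t) (k : ℕ) :
    ((k : ℝ) + 1) * acoef t (k + 1) = ((k : ℝ) + t) * acoef t k := by
  have hkt : (k : ℝ) + t ≠ 0 := by positivity
  have hG : Real.Gamma (((k : ℕ) + 1 : ℕ) + t) = ((k : ℝ) + t) * Real.Gamma ((k : ℝ) + t) := by
    push_cast
    rw [show (k : ℝ) + 1 + t = ((k : ℝ) + t) + 1 by ring, Real.Gamma_add_one hkt]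
  have hGt : Real.Gamma t ≠ 0 := (Real.Gamma_pos_of_pos ht).ne'
  have hf : (k.factorial : ℝ) ≠ 0 := Nat.cast_ne_zero.mpr k.factorial_ne_zero
  unfold acoef
  rw [hG, Nat.factorial_succ]
  push_cast
  field_simp

lemma rising_eq (t : ℝ) (ht : 0 < t) (k : ℕ) :
    rising ((k : ℝ) + 1) (t - 1) = Real.Gamma t * acoef t k := by
  have hf : Real.Gamma ((k : ℝ) + 1) = (k.factorial : ℝ) := Real.Gamma_nat_eq_factorial k
  have hGt : Real.Gamma t ≠ 0 := (Real.Gamma_pos_of_pos ht).ne'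
  have hfne : (k.factorial : ℝ) ≠ 0 := Nat.cast_ne_zero.mpr k.factorial_ne_zero
  unfold rising acoef
  by_cases h : t - 1 = 0
  · have ht1 : t = 1 := by linarith
    subst ht1
    simp [hf, Real.Gamma_one, div_self hfne]
  · rw [if_neg h, show (k : ℝ) + 1 + (t - 1) = (k : ℝ) + t by ring, hf]
    field_simp

lemma vandermonde_acoef (α μ : ℝ) (hα : 0 < α) (hμ : 0 < μ) (m : ℕ) :
    ∑ k ∈ Finset.range (m + 1), acoef α (m - k) * acoef μ k = acoef (α + μ) m := by
  induction m with
  | zero =>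
      simp [acoef_zero α (Real.Gamma_pos_of_pos hα).ne',
        acoef_zero μ (Real.Gamma_pos_of_pos hμ).ne',
        acoef_zero (α + μ) (Real.Gamma_pos_of_pos (by linarith)).ne']
  | succ m ih =>
      have hm1 : ((m : ℝ) + 1) ≠ 0 := by positivity
      apply mul_left_cancel₀ hm1
      have key : ((m : ℝ) + 1) * ∑ k ∈ Finset.range (m + 1 + 1), acoef α (m + 1 - k) * acoef μ k
          = ((m : ℝ) + α + μ) * ∑ k ∈ Finset.range (m + 1), acoef α (m - k) * acoef μ k := by
        rw [Finset.mul_sum, Finset.mul_sum]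
        have split : ∀ k ∈ Finset.range (m + 1 + 1),
            ((m : ℝ) + 1) * (acoef α (m + 1 - k) * acoef μ k)
            = (((m + 1 - k : ℕ) : ℝ) * acoef α (m + 1 - k)) * acoef μ k
              + ((k : ℝ) * acoef μ k) * acoef α (m + 1 - k) := by
          intro k hk
          rw [Finset.mem_range] at hk
          have : ((m + 1 - k : ℕ) : ℝ) = (m : ℝ) + 1 - (k : ℝ) := by
            have : k ≤ m + 1 := by omega
            push_cast [Nat.cast_sub this]
            ring
          rw [this]; ring
        rw [Finset.sum_congr rfl split, Finset.sum_add_distrib]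
        have hA : ∑ k ∈ Finset.range (m + 1 + 1),
            (((m + 1 - k : ℕ) : ℝ) * acoef α (m + 1 - k)) * acoef μ k
            = ∑ k ∈ Finset.range (m + 1), (((m - k : ℕ) : ℝ) + α) * (acoef α (m - k) * acoef μ k) := by
          rw [Finset.sum_range_succ]
          simp only [Nat.sub_self, Nat.cast_zero, zero_mul]
          rw [add_zero]
          apply Finset.sum_congr rfl
          intro k hk
          rw [Finset.mem_range] at hk
          have h1 : m + 1 - k = (m - k) + 1 := by omega
          rw [h1, show (((m - k : ℕ) + 1 : ℕ) : ℝ) = ((m - k : ℕ) : ℝ) + 1 by push_cast; ring,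
            acoef_succ α hα (m - k)]
          ring
        have hB : ∑ k ∈ Finset.range (m + 1 + 1),
            ((k : ℝ) * acoef μ k) * acoef α (m + 1 - k)
            = ∑ k ∈ Finset.range (m + 1), ((k : ℝ) + μ) * (acoef α (m - k) * acoef μ k) := by
          rw [Finset.sum_range_succ']
          simp only [Nat.cast_zero, zero_mul]
          rw [add_zero]
          apply Finset.sum_congr rfl
          intro k hk
          rw [Finset.mem_range] at hk
          have h1 : m + 1 - (k + 1) = m - k := by omega
          rw [h1, show ((k + 1 : ℕ) : ℝ) = (k : ℝ) + 1 by push_cast; ring,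
            acoef_succ μ hμ k]
          ring
        rw [hA, hB, ← Finset.sum_add_distrib]
        apply Finset.sum_congr rfl
        intro k hk
        rw [Finset.mem_range] at hk
        have : ((m - k : ℕ) : ℝ) = (m : ℝ) - (k : ℝ) := by
          have : k ≤ m := by omega
          push_cast [Nat.cast_sub this]; ring
        rw [this]; ring
      rw [key, ih]
      have := acoef_succ (α + μ) (by linarith) m
      push_cast
      linarith [this]

/-- Semigroup property of the left nabla fractional sums: for `α, μ > 0` and any
function `f` on `ℕ_a`, `(ₐ∇^{-α}(ₐ∇^{-μ}f))(v) = (ₐ∇^{-(α+μ)}f)(v)` at every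
point `v = a + n ∈ ℕ_{a+1}`. -/
theorem nablaSumL_semigroup (α μ : ℝ) (hα : 0 < α) (hμ : 0 < μ) (f : ℕ → ℝ)
    (n : ℕ) (hn : 1 ≤ n) :
    nablaSumL α (nablaSumL μ f) n = nablaSumL (α + μ) f n := by
  have hαne : α ≠ 0 := hα.ne'
  have hμne : μ ≠ 0 := hμ.ne'
  have hαμne : α + μ ≠ 0 := by positivity
  have hGα : Real.Gamma α ≠ 0 := (Real.Gamma_pos_of_pos hα).ne'
  have hGμ : Real.Gamma μ ≠ 0 := (Real.Gamma_pos_of_pos hμ).ne'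
  have hGαμ : Real.Gamma (α + μ) ≠ 0 := (Real.Gamma_pos_of_pos (by linarith)).ne'
  -- rewrite rising terms via acoef
  have hr : ∀ (t : ℝ), 0 < t → ∀ i j : ℕ, i ≤ j →
      rising ((j : ℝ) - (i : ℝ) + 1) (t - 1) = Real.Gamma t * acoef t (j - i) := by
    intro t ht i j hij
    have : (j : ℝ) - (i : ℝ) = ((j - i : ℕ) : ℝ) := by
      push_cast [Nat.cast_sub hij]; ring
    rw [this, rising_eq t ht]
  simp only [nablaSumL, if_neg hαne, if_neg hμne, if_neg hαμne]
  rw [Finset.mul_sum, Finset.mul_sum]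
  -- LHS: swap sums
  have swap : ∑ j ∈ Finset.Icc 1 n, (1 / Real.Gamma α) *
        (rising ((n : ℝ) - (j : ℝ) + 1) (α - 1) *
          ((1 / Real.Gamma μ) * ∑ i ∈ Finset.Icc 1 j, rising ((j : ℝ) - (i : ℝ) + 1) (μ - 1) * f i))
      = ∑ i ∈ Finset.Icc 1 n, ∑ j ∈ Finset.Icc i n,
          (1 / Real.Gamma α) * (rising ((n : ℝ) - (j : ℝ) + 1) (α - 1) *
            ((1 / Real.Gamma μ) * (rising ((j : ℝ) - (i : ℝ) + 1) (μ - 1) * f i))) := by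
    simp only [Finset.mul_sum]
    rw [Finset.sum_comm' (t' := Finset.Icc 1 n) (s' := fun i => Finset.Icc i n) (by
      intro j i
      simp only [Finset.mem_Icc]
      omega)]
  rw [swap]
  apply Finset.sum_congr rfl
  intro i hi
  rw [Finset.mem_Icc] at hi
  have inner : ∑ j ∈ Finset.Icc i n,
      (1 / Real.Gamma α) * (rising ((n : ℝ) - (j : ℝ) + 1) (α - 1) *
        ((1 / Real.Gamma μ) * (rising ((j : ℝ) - (i : ℝ) + 1) (μ - 1) * f i)))
      = (∑ j ∈ Finset.Icc i n, acoef α (n - j) * acoef μ (j - i)) * f i := by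
    rw [Finset.sum_mul]
    apply Finset.sum_congr rfl
    intro j hj
    rw [Finset.mem_Icc] at hj
    rw [hr α hα j n hj.2, hr μ hμ i j hj.1]
    field_simp
  rw [inner]
  -- reindex j = i + k
  have reindex : ∑ j ∈ Finset.Icc i n, acoef α (n - j) * acoef μ (j - i)
      = ∑ k ∈ Finset.range (n - i + 1), acoef α ((n - i) - k) * acoef μ k := by
    rw [show Finset.Icc i n = Finset.Ico i (n + 1) by rw [Finset.Ico_add_one_right_eq_Icc],
      Finset.sum_Ico_eq_sum_range]
    have : n + 1 - i = n - i + 1 := by omega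
    rw [this]
    apply Finset.sum_congr rfl
    intro k hk
    rw [Finset.mem_range] at hk
    congr 1
    · congr 1; omega
    · congr 1; omega
  rw [reindex, vandermonde_acoef α μ hα hμ (n - i)]
  rw [hr (α + μ) (by linarith) i n hi.2]
  unfold acoef
  field_simp
end

section
/- For μ > 0 and complex z with |1-z| < 1, the nabla discrete Laplace transform of t^{\overline{μ-1}} equals Γ(μ)/z^μ, i.e., ∑_{t=1}^{∞} (1-z)^{t-1} · t^{\overline{μ-1}} = Γ(μ)/z^μ. -/
open Complex Filter

namespace LaplaceAux

/-- Real coefficient `Γ(n+μ)/n!`. -/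
noncomputable def a (μ : ℝ) (n : ℕ) : ℝ := Real.Gamma (n + μ) / n.factorial

lemma a_pos {μ : ℝ} (hμ : 0 < μ) (n : ℕ) : 0 < a μ n :=
  div_pos (Real.Gamma_pos_of_pos (by positivity)) (by positivity)

lemma a_rec {μ : ℝ} (hμ : 0 < μ) (n : ℕ) :
    ((n : ℝ) + 1) * a μ (n + 1) = ((n : ℝ) + μ) * a μ n := by
  have h : ((n : ℝ) + μ) ≠ 0 := by positivity
  have hG : Real.Gamma (((n : ℕ) + 1 : ℕ) + μ) = ((n : ℝ) + μ) * Real.Gamma (n + μ) := by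
    rw [show (((n : ℕ) + 1 : ℕ) : ℝ) + μ = ((n : ℝ) + μ) + 1 by push_cast; ring,
      Real.Gamma_add_one h]
  have hf : ((n : ℕ).factorial : ℝ) ≠ 0 := by positivity
  have hn1 : ((n : ℝ) + 1) ≠ 0 := by positivity
  rw [a, a, hG, Nat.factorial_succ]
  push_cast
  field_simp

lemma acast (μ : ℝ) (n : ℕ) :
    ((a μ n : ℝ) : ℂ) = Complex.Gamma ((n : ℂ) + μ) / (n.factorial : ℂ) := by
  rw [a, show ((n : ℂ) + μ) = (((n : ℝ) + μ : ℝ) : ℂ) by push_cast; ring,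
    Complex.Gamma_ofReal]
  push_cast
  ring

lemma tendsto_ratio (μ : ℝ) :
    Tendsto (fun n : ℕ => ((n : ℝ) + μ) / ((n : ℝ) + 1)) atTop (nhds 1) := by
  have h : ∀ n : ℕ, ((n : ℝ) + μ) / ((n : ℝ) + 1) = 1 + (μ - 1) * (1 / ((n : ℝ) + 1)) := by
    intro n
    have : ((n : ℝ) + 1) ≠ 0 := by positivity
    field_simp
    ring
  simp_rw [h]
  have := tendsto_one_div_add_atTop_nhds_zero_nat (𝕜 := ℝ)
  simpa using ((this.const_mul (μ - 1)).const_add 1)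

lemma summable_ar {μ : ℝ} (hμ : 0 < μ) {r : ℝ} (h0 : 0 ≤ r) (h1 : r < 1) :
    Summable (fun n : ℕ => a μ n * r ^ n) := by
  rcases eq_or_lt_of_le h0 with rfl | hr
  · apply summable_of_ne_finset_zero (s := {0})
    intro n hn
    simp only [Finset.mem_singleton] at hn
    simp [zero_pow hn]
  · apply summable_of_ratio_test_tendsto_lt_one h1
    · filter_upwards with n
      exact ne_of_gt (mul_pos (a_pos hμ n) (pow_pos hr n))
    · have key : ∀ n : ℕ, ‖a μ (n + 1) * r ^ (n + 1)‖ / ‖a μ n * r ^ n‖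
          = (((n : ℝ) + μ) / ((n : ℝ) + 1)) * r := by
        intro n
        rw [Real.norm_eq_abs, Real.norm_eq_abs,
          abs_of_pos (mul_pos (a_pos hμ (n + 1)) (pow_pos hr _)),
          abs_of_pos (mul_pos (a_pos hμ n) (pow_pos hr _))]
        have hrec := a_rec hμ n
        have hn1 : ((n : ℝ) + 1) ≠ 0 := by positivity
        have ha : a μ n ≠ 0 := ne_of_gt (a_pos hμ n)
        have hrn : r ^ n ≠ 0 := ne_of_gt (pow_pos hr n)
        have : a μ (n + 1) = ((n : ℝ) + μ) * a μ n / ((n : ℝ) + 1) := by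
          field_simp
          linarith [hrec]
        rw [this, pow_succ]
        field_simp
      simp_rw [key]
      simpa using (tendsto_ratio μ).mul_const r

noncomputable def F (μ : ℝ) (w : ℂ) : ℂ := ∑' n : ℕ, ((a μ n : ℝ) : ℂ) * w ^ n

lemma term_norm (μ : ℝ) (hμ : 0 < μ) (n : ℕ) (x : ℂ) :
    ‖((a μ n : ℝ) : ℂ) * x ^ n‖ = a μ n * ‖x‖ ^ n := by
  rw [norm_mul, norm_pow, Complex.norm_real, Real.norm_eq_abs, abs_of_pos (a_pos hμ n)]

lemma summable_term {μ : ℝ} (hμ : 0 < μ) {w : ℂ} (hw : ‖w‖ < 1) :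
    Summable (fun n : ℕ => ((a μ n : ℝ) : ℂ) * w ^ n) := by
  apply Summable.of_norm
  have := summable_ar hμ (norm_nonneg w) hw
  refine this.congr fun n => ?_
  rw [term_norm μ hμ]

lemma hasSum_F {μ : ℝ} (hμ : 0 < μ) {w : ℂ} (hw : ‖w‖ < 1) :
    HasSum (fun n : ℕ => ((a μ n : ℝ) : ℂ) * w ^ n) (F μ w) :=
  (summable_term hμ hw).hasSum

lemma deriv_F {μ : ℝ} (hμ : 0 < μ) {w : ℂ} (hw : ‖w‖ < 1) :
    DifferentiableAt ℂ (F μ) w ∧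
      HasSum (fun n : ℕ => ((a μ n : ℝ) : ℂ) * ((n : ℂ) * w ^ (n - 1)))
        (deriv (F μ) w) := by
  set r : ℝ := (‖w‖ + 1) / 2 with hrdef
  have hwr : ‖w‖ < r := by rw [hrdef]; linarith
  have hr0 : 0 ≤ r := le_trans (norm_nonneg w) hwr.le
  have hr1 : r < 1 := by rw [hrdef]; linarith
  have hU : IsOpen (Metric.ball (0 : ℂ) r) := Metric.isOpen_ball
  have hwU : w ∈ Metric.ball (0 : ℂ) r := by
    simpa [Metric.mem_ball, dist_zero_right] using hwr
  have hu : Summable (fun n : ℕ => a μ n * r ^ n) := summable_ar hμ hr0 hr1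
  have hdiff : ∀ n : ℕ, DifferentiableOn ℂ (fun x : ℂ => ((a μ n : ℝ) : ℂ) * x ^ n)
      (Metric.ball (0 : ℂ) r) := fun n =>
    ((differentiable_const _).mul (differentiable_pow n)).differentiableOn
  have hb : ∀ (n : ℕ) (x : ℂ), x ∈ Metric.ball (0 : ℂ) r →
      ‖((a μ n : ℝ) : ℂ) * x ^ n‖ ≤ a μ n * r ^ n := by
    intro n x hx
    rw [term_norm μ hμ]
    have hxr : ‖x‖ ≤ r := by
      rw [Metric.mem_ball, dist_zero_right] at hx; exact hx.le
    exact mul_le_mul_of_nonneg_left (pow_le_pow_left₀ (norm_nonneg x) hxr n)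
      (a_pos hμ n).le
  have hA : DifferentiableOn ℂ (F μ) (Metric.ball (0 : ℂ) r) :=
    differentiableOn_tsum_of_summable_norm hu hdiff hU hb
  have hB := hasSum_deriv_of_summable_norm hu hdiff hU hb hwU
  refine ⟨(hA w hwU).differentiableAt (hU.mem_nhds hwU), ?_⟩
  have hterm : ∀ n : ℕ, deriv (fun x : ℂ => ((a μ n : ℝ) : ℂ) * x ^ n) w
      = ((a μ n : ℝ) : ℂ) * ((n : ℂ) * w ^ (n - 1)) := fun n => by
    rw [deriv_const_mul _ (differentiableAt_pow n), deriv_pow_field]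
  simp only [hterm] at hB
  exact hB

lemma crec {μ : ℝ} (hμ : 0 < μ) (n : ℕ) :
    ((n : ℂ) + 1) * ((a μ (n + 1) : ℝ) : ℂ) = ((n : ℂ) + μ) * ((a μ n : ℝ) : ℂ) := by
  have := a_rec hμ n
  have := congrArg (fun t : ℝ => (t : ℂ)) this
  push_cast at this ⊢
  exact this

lemma ode {μ : ℝ} (hμ : 0 < μ) {w : ℂ} (hw : ‖w‖ < 1) :
    (1 - w) * deriv (F μ) w = (μ : ℂ) * F μ w := by
  obtain ⟨_, hD⟩ := deriv_F hμ hw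
  set D := deriv (F μ) w with hDdef
  have hD1 : HasSum (fun n : ℕ =>
      ((a μ (n + 1) : ℝ) : ℂ) * (((n + 1 : ℕ) : ℂ) * w ^ (n + 1 - 1))) D := by
    have := (hasSum_nat_add_iff'
      (f := fun n : ℕ => ((a μ n : ℝ) : ℂ) * ((n : ℂ) * w ^ (n - 1))) 1).mpr hD
    simpa using this
  have hD2 : HasSum (fun n : ℕ => ((n : ℂ) + μ) * ((a μ n : ℝ) : ℂ) * w ^ n) D := by
    have heq : (fun n : ℕ =>
        ((a μ (n + 1) : ℝ) : ℂ) * (((n + 1 : ℕ) : ℂ) * w ^ (n + 1 - 1)))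
        = fun n : ℕ => ((n : ℂ) + μ) * ((a μ n : ℝ) : ℂ) * w ^ n := by
      funext n
      rw [← crec hμ n]
      push_cast
      ring
    rwa [heq] at hD1
  have hS1 : HasSum (fun n : ℕ => (n : ℂ) * ((a μ n : ℝ) : ℂ) * w ^ n) (w * D) := by
    have h := hD.mul_left w
    have heq : (fun n : ℕ => w * (((a μ n : ℝ) : ℂ) * ((n : ℂ) * w ^ (n - 1))))
        = fun n : ℕ => (n : ℂ) * ((a μ n : ℝ) : ℂ) * w ^ n := by
      funext n
      cases n with
      | zero => simp
      | succ m => push_cast; rw [pow_succ]; ring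
    rwa [heq] at h
  have hS2 : HasSum (fun n : ℕ => (n : ℂ) * ((a μ n : ℝ) : ℂ) * w ^ n)
      (D - (μ : ℂ) * F μ w) := by
    have h := hD2.sub ((hasSum_F hμ hw).mul_left (μ : ℂ))
    have heq : (fun n : ℕ => ((n : ℂ) + μ) * ((a μ n : ℝ) : ℂ) * w ^ n
        - (μ : ℂ) * (((a μ n : ℝ) : ℂ) * w ^ n))
        = fun n : ℕ => (n : ℂ) * ((a μ n : ℝ) : ℂ) * w ^ n := by
      funext n; ring
    rwa [heq] at h
  have hu := hS1.unique hS2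
  linear_combination -hu

lemma F_eq {μ : ℝ} (hμ : 0 < μ) {w : ℂ} (hw : ‖w‖ < 1) :
    F μ w = Complex.Gamma (μ : ℂ) / (1 - w) ^ (μ : ℂ) := by
  set G : ℂ → ℂ := fun x => (1 - x) ^ (μ : ℂ) * F μ x with hGdef
  have hG' : ∀ x ∈ Metric.ball (0 : ℂ) 1, HasDerivAt G 0 x := by
    intro x hx
    have hx1 : ‖x‖ < 1 := by simpa [Metric.mem_ball, dist_zero_right] using hx
    have hxne : (1 : ℂ) - x ≠ 0 := by
      intro h
      rw [sub_eq_zero] at h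
      rw [← h] at hx1
      simp at hx1
    have hslit : (1 - x) ∈ slitPlane := by
      left
      have hre : x.re ≤ ‖x‖ := by
        simpa using Complex.re_le_norm x
      simp only [sub_re, one_re]
      linarith
    have h1 : HasDerivAt (fun y : ℂ => (1 - y) ^ (μ : ℂ))
        ((μ : ℂ) * (1 - x) ^ ((μ : ℂ) - 1) * (-1)) x :=
      HasDerivAt.cpow_const ((hasDerivAt_id x).const_sub 1) hslit
    have h2 : HasDerivAt (F μ) (deriv (F μ) x) x := ((deriv_F hμ hx1).1).hasDerivAt
    have h3 := h1.mul h2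
    have hode := ode hμ hx1
    refine h3.congr_deriv ?_
    have hpow : (1 - x) ^ ((μ : ℂ) - 1) = (1 - x) ^ (μ : ℂ) / (1 - x) := by
      rw [cpow_sub _ _ hxne, cpow_one]
    rw [hpow]
    field_simp
    linear_combination ((1 - x) ^ (μ : ℂ)) * hode
  have hF0 : F μ 0 = Complex.Gamma (μ : ℂ) := by
    rw [F, tsum_eq_single 0 (fun n hn => by simp [zero_pow hn])]
    rw [acast]
    simp
  have hG0 : G 0 = Complex.Gamma (μ : ℂ) := by
    simp [hGdef, hF0, one_cpow]
  have hwmem : w ∈ Metric.ball (0 : ℂ) 1 := by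
    simpa [Metric.mem_ball, dist_zero_right] using hw
  have h0mem : (0 : ℂ) ∈ Metric.ball (0 : ℂ) 1 := by
    simp [Metric.mem_ball]
  have hconst : G w = G 0 := by
    apply Convex.is_const_of_fderivWithin_eq_zero (convex_ball (0 : ℂ) 1)
      (fun x hx => ((hG' x hx).differentiableAt).differentiableWithinAt)
      (fun x hx => ?_) hwmem h0mem
    rw [fderivWithin_of_isOpen Metric.isOpen_ball hx, (hG' x hx).hasFDerivAt.fderiv]
    ext
    simp
  have hwne : (1 : ℂ) - w ≠ 0 := by
    intro h
    rw [sub_eq_zero] at h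
    rw [← h] at hw
    simp at hw
  have hne : (1 - w) ^ (μ : ℂ) ≠ 0 := by
    rw [cpow_def_of_ne_zero hwne]
    exact Complex.exp_ne_zero _
  rw [eq_div_iff hne]
  have : G w = Complex.Gamma (μ : ℂ) := hconst.trans hG0
  rw [hGdef] at this
  linear_combination this

lemma main {μ : ℝ} (hμ : 0 < μ) {w : ℂ} (hw : ‖w‖ < 1) :
    HasSum (fun n : ℕ => ((a μ n : ℝ) : ℂ) * w ^ n)
      (Complex.Gamma (μ : ℂ) / (1 - w) ^ (μ : ℂ)) := by
  have h := hasSum_F hμ hw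
  rwa [F_eq hμ hw] at h


end LaplaceAux

/-- The complex rising function `x^{\overline{μ}} = Γ(x+μ)/Γ(x)`. -/
noncomputable def crising (x mu : ℂ) : ℂ :=
  if mu = 0 then 1 else Complex.Gamma (x + mu) / Complex.Gamma x

/-- For `μ > 0` and `|1-z| < 1`, the nabla discrete Laplace transform of
`t^{\overline{μ-1}}` equals `Γ(μ)/z^μ`:
`∑_{t=1}^{∞} (1-z)^{t-1} t^{\overline{μ-1}} = Γ(μ)/z^μ` (here `t = n + 1`). -/
theorem laplace_rising (μ : ℝ) (hμ : 0 < μ) (z : ℂ) (hz : ‖1 - z‖ < 1) :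
    HasSum (fun n : ℕ => (1 - z) ^ n * crising ((n : ℂ) + 1) ((μ : ℂ) - 1))
      (Complex.Gamma (μ : ℂ) / z ^ (μ : ℂ)) := by
  have hw : ‖(1 : ℂ) - z‖ < 1 := by exact hz
  have h := LaplaceAux.main hμ hw
  rw [sub_sub_cancel] at h
  have hcr : ∀ n : ℕ, crising ((n : ℂ) + 1) ((μ : ℂ) - 1)
      = ((LaplaceAux.a μ n : ℝ) : ℂ) := by
    intro n
    rw [LaplaceAux.acast]
    by_cases h1 : (μ : ℂ) - 1 = 0
    · have hμ1 : (μ : ℂ) = 1 := by linear_combination h1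
      rw [crising, if_pos h1, hμ1, Complex.Gamma_nat_eq_factorial n,
        div_self (by exact_mod_cast Nat.factorial_ne_zero n)]
    · rw [crising, if_neg h1, Complex.Gamma_nat_eq_factorial n]
      congr 2
      ring
  have heq : (fun n : ℕ => (1 - z) ^ n * crising ((n : ℂ) + 1) ((μ : ℂ) - 1))
      = fun n : ℕ => ((LaplaceAux.a μ n : ℝ) : ℂ) * (1 - z) ^ n := by
    funext n
    rw [hcr n, mul_comm]
  rw [heq]
  exact h
end

section
/- For μ > 0, b > 0, and |1-z| < b, the nabla discrete Laplace transform of t^{\overline{μ-1}} b^{-t} equals b^{μ-1}Γ(μ)/(z+b-1)^μ, i.e., ∑_{t=1}^{∞} (1-z)^{t-1} t^{\overline{μ-1}} b^{-t} = b^{μ-1}Γ(μ)/(z+b-1)^μ. -/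
open Complex MeasureTheory Set Filter
open scoped Topology NNReal ENNReal Nat

namespace LaplaceRising

noncomputable def aC (μ : ℝ) (n : ℕ) : ℂ := Complex.Gamma ((μ : ℂ) + n) / n !

variable {μ : ℝ}

lemma aC_eq (μ : ℝ) (n : ℕ) : aC μ n = ((Real.Gamma (μ + n) / n ! : ℝ) : ℂ) := by
  rw [aC]
  push_cast [Complex.Gamma_ofReal]
  ring_nf
  rw [← Complex.Gamma_ofReal]
  push_cast
  ring

lemma aR_pos (hμ : 0 < μ) (n : ℕ) : 0 < Real.Gamma (μ + n) / n ! :=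
  div_pos (Real.Gamma_pos_of_pos (by positivity)) (by positivity)

lemma norm_aC (hμ : 0 < μ) (n : ℕ) : ‖aC μ n‖ = Real.Gamma (μ + n) / n ! := by
  rw [aC_eq, Complex.norm_real, Real.norm_eq_abs, abs_of_pos (aR_pos hμ n)]

lemma tendsto_ratio (μ : ℝ) :
    Tendsto (fun n : ℕ => (μ + (n : ℝ)) / ((n : ℝ) + 1)) atTop (𝓝 1) := by
  have h : ∀ n : ℕ, (μ + (n : ℝ)) / ((n : ℝ) + 1) = (μ - 1) * (1 / ((n : ℝ) + 1)) + 1 := by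
    intro n
    have hn : ((n : ℝ) + 1) ≠ 0 := by positivity
    field_simp
    ring
  simp_rw [h]
  have := (tendsto_one_div_add_atTop_nhds_zero_nat).const_mul (μ - 1)
  simpa using this.add_const 1

lemma gamma_succ (hμ : 0 < μ) (n : ℕ) :
    Real.Gamma (μ + (n + 1 : ℕ)) = (μ + n) * Real.Gamma (μ + n) := by
  have h : μ + (n : ℝ) ≠ 0 := by positivity
  push_cast
  rw [← add_assoc, Real.Gamma_add_one h]

lemma ratio_eq (hμ : 0 < μ) (x : ℝ) (hx : 0 < x) (n : ℕ) :
    ‖Real.Gamma (μ + (n + 1 : ℕ)) / (n + 1)! * x ^ (n + 1)‖ /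
      ‖Real.Gamma (μ + n) / n ! * x ^ n‖ = (μ + n) / (n + 1) * x := by
  have h1 : 0 < Real.Gamma (μ + n) / n ! * x ^ n := mul_pos (aR_pos hμ n) (pow_pos hx n)
  have h2 : 0 < Real.Gamma (μ + (n + 1 : ℕ)) / (n + 1)! * x ^ (n + 1) :=
    mul_pos (aR_pos hμ (n + 1)) (pow_pos hx (n + 1))
  rw [Real.norm_of_nonneg h1.le, Real.norm_of_nonneg h2.le, gamma_succ hμ n,
    Nat.factorial_succ, pow_succ]
  have hΓ : Real.Gamma (μ + n) ≠ 0 := (Real.Gamma_pos_of_pos (by positivity)).ne'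
  have hf : (n ! : ℝ) ≠ 0 := by positivity
  have hx' : x ^ n ≠ 0 := (pow_pos hx n).ne'
  field_simp
  push_cast
  ring

lemma summable_real (hμ : 0 < μ) {x : ℝ} (h0 : 0 < x) (h1 : x < 1) :
    Summable (fun n : ℕ => Real.Gamma (μ + n) / n ! * x ^ n) := by
  apply summable_of_ratio_test_tendsto_lt_one h1
  · filter_upwards with n
    exact (mul_pos (aR_pos hμ n) (pow_pos h0 n)).ne'
  · have h := (tendsto_ratio μ).mul_const x
    rw [one_mul] at h
    refine h.congr fun n => ?_
    rw [ratio_eq hμ x h0 n]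


lemma hasSum_real (hμ : 0 < μ) {x : ℝ} (h0 : 0 < x) (h1 : x < 1) :
    HasSum (fun n : ℕ => aC μ n * (x : ℂ) ^ n)
      ((1 / ((1 - x : ℝ) : ℂ)) ^ (μ : ℂ) * Complex.Gamma (μ : ℂ)) := by
  set F : ℕ → ℝ → ℂ := fun n t =>
    (x : ℂ) ^ n / n ! * ((Real.exp (-t) : ℂ) * (t : ℂ) ^ (((μ : ℂ) + n) - 1)) with hF
  have hre : ∀ n : ℕ, 0 < ((μ : ℂ) + n).re := by
    intro n
    simp only [add_re, ofReal_re, natCast_re]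
    positivity
  have hint : ∀ n, Integrable (F n) (volume.restrict (Ioi 0)) := by
    intro n
    exact (Complex.GammaIntegral_convergent (hre n)).const_mul _
  have hnorm : ∀ n : ℕ, ∀ t ∈ Ioi (0:ℝ),
      ‖F n t‖ = x ^ n / n ! * (Real.exp (-t) * t ^ (μ + n - 1)) := by
    intro n t ht
    rw [mem_Ioi] at ht
    have : ((((μ : ℂ) + n) - 1).re) = μ + n - 1 := by
      simp
    rw [hF]
    simp only [norm_mul, norm_div, norm_pow, Complex.norm_real, Complex.norm_natCast,
      Real.norm_eq_abs, abs_of_pos h0, abs_of_pos (Real.exp_pos _),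
      Complex.norm_cpow_eq_rpow_re_of_pos ht, this, _root_.abs_of_pos h0]
  have hintnorm : ∀ n : ℕ, (∫ t in Ioi (0:ℝ), ‖F n t‖) = Real.Gamma (μ + n) / n ! * x ^ n := by
    intro n
    rw [setIntegral_congr_fun measurableSet_Ioi (fun t ht => hnorm n t ht),
      MeasureTheory.integral_const_mul, ← Real.Gamma_eq_integral (by positivity : (0:ℝ) < μ + n)]
    ring
  have hsum : Summable fun n => ∫ t in Ioi (0:ℝ), ‖F n t‖ := by
    rw [show (fun n => ∫ t in Ioi (0:ℝ), ‖F n t‖) =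
      (fun n : ℕ => Real.Gamma (μ + n) / n ! * x ^ n) from funext hintnorm]
    exact summable_real hμ h0 h1
  have KEY := hasSum_integral_of_summable_integral_norm hint hsum
  have hterm : ∀ n : ℕ, (∫ t in Ioi (0:ℝ), F n t) = aC μ n * (x : ℂ) ^ n := by
    intro n
    rw [hF]
    simp only
    rw [MeasureTheory.integral_const_mul, ← Complex.GammaIntegral,
      ← Complex.Gamma_eq_integral (hre n), aC]
    ring
  have htot : (∫ t in Ioi (0:ℝ), ∑' n, F n t)
      = (1 / ((1 - x : ℝ) : ℂ)) ^ (μ : ℂ) * Complex.Gamma (μ : ℂ) := by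
    rw [show (∫ t in Ioi (0:ℝ), ∑' n, F n t)
        = ∫ t in Ioi (0:ℝ), (t : ℂ) ^ ((μ : ℂ) - 1) * Complex.exp (-(((1 - x : ℝ) : ℂ) * t)) from
      setIntegral_congr_fun measurableSet_Ioi (fun t ht => ?_)]
    · exact integral_cpow_mul_exp_neg_mul_Ioi (by simpa using hμ) (by linarith)
    · rw [mem_Ioi] at ht
      have ht' : (t : ℂ) ≠ 0 := ofReal_ne_zero.mpr ht.ne'
      have hterm2 : ∀ n : ℕ, F n t
          = (Real.exp (-t) : ℂ) * (t : ℂ) ^ ((μ : ℂ) - 1) * (((x : ℂ) * t) ^ n / n !) := by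
        intro n
        rw [hF]
        simp only
        rw [show ((μ : ℂ) + n) - 1 = ((μ : ℂ) - 1) + n by ring, cpow_add _ _ ht',
          cpow_natCast, mul_pow]
        ring
      rw [tsum_congr hterm2, tsum_mul_left, show (∑' n : ℕ, ((x : ℂ) * t) ^ n / n !)
          = Complex.exp ((x : ℂ) * t) by rw [Complex.exp_eq_exp_ℂ, NormedSpace.exp_eq_tsum_div]]
      rw [Complex.ofReal_exp, mul_right_comm, ← Complex.exp_add,
        show ((-t : ℝ) : ℂ) + (x : ℂ) * t = -(((1 - x : ℝ) : ℂ) * t) by push_cast; ring,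
        mul_comm]
  rw [show (fun n => ∫ t in Ioi (0:ℝ), F n t) = (fun n => aC μ n * (x : ℂ) ^ n) from
    funext hterm, htot] at KEY
  exact KEY


lemma hasSum_binomial (hμ : 0 < μ) {w : ℂ} (hw : ‖w‖ < 1) :
    HasSum (fun n : ℕ => aC μ n * w ^ n)
      ((1 - w) ^ (-(μ : ℂ)) * Complex.Gamma (μ : ℂ)) := by
  set p := FormalMultilinearSeries.ofScalars ℂ (aC μ) with hp
  have hratio : Tendsto (fun n : ℕ => ‖aC μ (n + 1)‖ / ‖aC μ n‖) atTop (𝓝 (1 : ℝ≥0)) := by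
    have h : ∀ n : ℕ, ‖aC μ (n + 1)‖ / ‖aC μ n‖ = (μ + n) / (n + 1) := by
      intro n
      have h1 := ratio_eq hμ 1 one_pos n
      simp only [one_pow, mul_one] at h1
      rw [norm_aC hμ, norm_aC hμ]
      rw [Real.norm_of_nonneg (aR_pos hμ (n+1)).le, Real.norm_of_nonneg (aR_pos hμ n).le] at h1
      push_cast at h1 ⊢
      rw [← h1]
    simp only [h]
    exact_mod_cast tendsto_ratio μ
  have hrad : (1 : ℝ≥0∞) ≤ p.radius := by
    have := FormalMultilinearSeries.inv_le_ofScalars_radius_of_tendsto ℂ (aC μ)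
      (r := 1) one_ne_zero hratio
    simpa using this
  have hps : HasFPowerSeriesOnBall p.sum p 0 1 :=
    (p.hasFPowerSeriesOnBall (lt_of_lt_of_le zero_lt_one hrad)).mono zero_lt_one hrad
  have hmem : ∀ {y : ℂ}, ‖y‖ < 1 → y ∈ Metric.eball (0 : ℂ) 1 := by
    intro y hy
    rw [Metric.mem_eball, edist_zero_right, enorm_eq_nnnorm]
    exact_mod_cast hy
  have hsum : ∀ {y : ℂ}, ‖y‖ < 1 → HasSum (fun n : ℕ => aC μ n * y ^ n) (p.sum y) := by
    intro y hy
    have h2 : ∀ n : ℕ, (p n fun _ => y) = aC μ n * y ^ n := fun n => by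
      rw [hp, FormalMultilinearSeries.ofScalars_apply_eq, smul_eq_mul]
    have := hps.hasSum (hmem hy)
    simp only [h2, zero_add] at this
    exact this
  have hg : AnalyticOnNhd ℂ p.sum (Metric.ball (0 : ℂ) 1) := fun y hy =>
    hps.analyticOnNhd y (hmem (mem_ball_zero_iff.mp hy))
  have hslit : ∀ y ∈ Metric.ball (0 : ℂ) 1, 0 < (1 - y).re := by
    intro y hy
    rw [mem_ball_zero_iff] at hy
    have h := (le_abs_self y.re).trans (Complex.abs_re_le_norm y)
    simp only [sub_re, one_re]
    linarith
  have hh : AnalyticOnNhd ℂ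
      (fun w : ℂ => (1 - w) ^ (-(μ : ℂ)) * Complex.Gamma (μ : ℂ)) (Metric.ball (0 : ℂ) 1) := by
    apply DifferentiableOn.analyticOnNhd ?_ Metric.isOpen_ball
    intro y hy
    apply DifferentiableAt.differentiableWithinAt
    apply DifferentiableAt.mul_const
    exact DifferentiableAt.cpow ((differentiable_const _).sub differentiable_id).differentiableAt
      (differentiableAt_const _) (Or.inl (hslit y hy))
  have hfreq : ∃ᶠ z in 𝓝[≠] (0 : ℂ), p.sum z
      = (1 - z) ^ (-(μ : ℂ)) * Complex.Gamma (μ : ℂ) := by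
    have tend : Tendsto (fun k : ℕ => ((1 / (k + 2) : ℝ) : ℂ)) atTop (𝓝[≠] (0 : ℂ)) := by
      apply tendsto_nhdsWithin_of_tendsto_nhds_of_eventually_within
      · have h1 : Tendsto (fun k : ℕ => ((k : ℝ) + 2)) atTop atTop :=
          tendsto_atTop_add_const_right _ 2 tendsto_natCast_atTop_atTop
        have h2 := h1.inv_tendsto_atTop
        have := (Complex.continuous_ofReal.tendsto 0).comp h2
        simpa [Function.comp_def, one_div] using this
      · filter_upwards with k
        simp only [mem_compl_iff, mem_singleton_iff, ofReal_eq_zero]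
        positivity
    apply tend.frequently
    apply Frequently.of_forall
    intro k
    set x : ℝ := 1 / ((k : ℝ) + 2) with hx
    have h0 : 0 < x := by positivity
    have h1 : x < 1 := by
      rw [hx, div_lt_one (by positivity)]
      linarith [Nat.cast_nonneg (α := ℝ) k]
    have hxx : ‖((x : ℝ) : ℂ)‖ < 1 := by
      rw [Complex.norm_real, Real.norm_eq_abs, abs_of_pos h0]; exact h1
    have e1 := ((hasSum_real hμ h0 h1).unique (hsum hxx)).symm
    have harg : ((1 - x : ℝ) : ℂ).arg ≠ Real.pi := by
      rw [Complex.arg_ofReal_of_nonneg (by linarith)]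
      exact Real.pi_ne_zero.symm
    show p.sum ((x : ℝ) : ℂ) = (1 - ((x : ℝ) : ℂ)) ^ (-(μ : ℂ)) * Complex.Gamma (μ : ℂ)
    rw [e1, one_div, inv_cpow _ _ harg, ← cpow_neg, ofReal_sub, ofReal_one]
  have heq : Set.EqOn p.sum
      (fun w : ℂ => (1 - w) ^ (-(μ : ℂ)) * Complex.Gamma (μ : ℂ)) (Metric.ball (0 : ℂ) 1) :=
    hg.eqOn_of_preconnected_of_frequently_eq hh (convex_ball _ _).isPreconnected
      (Metric.mem_ball_self one_pos) hfreq
  have := hsum hw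
  rwa [heq (mem_ball_zero_iff.mpr hw)] at this


lemma ofReal_mul_cpow {r : ℝ} (hr : 0 < r) {x : ℂ} (hx : x ≠ 0) (s : ℂ) :
    ((r : ℂ) * x) ^ s = (r : ℂ) ^ s * x ^ s := by
  have hr' : (r : ℂ) ≠ 0 := ofReal_ne_zero.mpr hr.ne'
  rw [cpow_def_of_ne_zero (mul_ne_zero hr' hx), cpow_def_of_ne_zero hr',
    cpow_def_of_ne_zero hx, Complex.log_ofReal_mul hr hx, add_mul, Complex.exp_add,
    Complex.ofReal_log hr.le]


end LaplaceRising

/-- For `μ > 0`, `b > 0` and `|1-z| < b`, the nabla discrete Laplace transform of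
`t^{\overline{μ-1}} b^{-t}` equals `b^{μ-1}Γ(μ)/(z+b-1)^μ` (here `t = n + 1`). -/
theorem laplace_rising_exp (μ b : ℝ) (hμ : 0 < μ) (hb : 0 < b) (z : ℂ)
    (hz : ‖1 - z‖ < b) :
    HasSum (fun n : ℕ =>
        (1 - z) ^ n * crising ((n : ℂ) + 1) ((μ : ℂ) - 1) * (b : ℂ) ^ (-((n : ℂ) + 1)))
      ((b : ℂ) ^ ((μ : ℂ) - 1) * Complex.Gamma (μ : ℂ) / (z + (b : ℂ) - 1) ^ (μ : ℂ)) := by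
  have hbC : (b : ℂ) ≠ 0 := Complex.ofReal_ne_zero.mpr hb.ne'
  set w : ℂ := (1 - z) / b with hwdef
  have hw : ‖w‖ < 1 := by
    rw [hwdef, norm_div, Complex.norm_real, Real.norm_eq_abs,
      abs_of_pos hb, div_lt_one hb]
    exact hz
  have H := (LaplaceRising.hasSum_binomial hμ hw).div_const (b : ℂ)
  -- convert the summand
  have hterm : ∀ n : ℕ,
      LaplaceRising.aC μ n * w ^ n / (b : ℂ)
        = (1 - z) ^ n * crising ((n : ℂ) + 1) ((μ : ℂ) - 1) * (b : ℂ) ^ (-((n : ℂ) + 1)) := by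
    intro n
    have hcri : crising ((n : ℂ) + 1) ((μ : ℂ) - 1) = LaplaceRising.aC μ n := by
      rw [crising, LaplaceRising.aC]
      have harg : (n : ℂ) + 1 + ((μ : ℂ) - 1) = (μ : ℂ) + n := by ring
      have hfac : Complex.Gamma ((n : ℂ) + 1) = (n ! : ℂ) := by
        exact_mod_cast Complex.Gamma_nat_eq_factorial n
      split_ifs with h
      · have h1 : (μ : ℂ) = 1 := by linear_combination h
        rw [h1, show (1 : ℂ) + n = (n : ℂ) + 1 by ring, hfac]
        exact (div_self (Nat.cast_ne_zero.mpr n.factorial_ne_zero)).symm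
      · rw [harg, hfac]
    have hpow : (b : ℂ) ^ (-((n : ℂ) + 1)) = ((b : ℂ) ^ (n + 1 : ℕ))⁻¹ := by
      rw [Complex.cpow_neg, show ((n : ℂ) + 1) = ((n + 1 : ℕ) : ℂ) by push_cast; ring,
        Complex.cpow_natCast]
    rw [hcri, hpow, hwdef, div_pow, pow_succ]
    have hbn : (b : ℂ) ^ n ≠ 0 := pow_ne_zero n hbC
    field_simp
  rw [show (fun n : ℕ => LaplaceRising.aC μ n * w ^ n / (b : ℂ))
      = (fun n : ℕ => (1 - z) ^ n * crising ((n : ℂ) + 1) ((μ : ℂ) - 1)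
          * (b : ℂ) ^ (-((n : ℂ) + 1))) from funext hterm] at H
  -- convert the value
  have hu : z + (b : ℂ) - 1 ≠ 0 := by
    intro h
    have : (1 : ℂ) - z = (b : ℂ) := by linear_combination -h
    rw [this, Complex.norm_real, Real.norm_eq_abs, abs_of_pos hb] at hz
    exact lt_irrefl _ hz
  have hval : (1 - w) ^ (-(μ : ℂ)) * Complex.Gamma (μ : ℂ) / (b : ℂ)
      = (b : ℂ) ^ ((μ : ℂ) - 1) * Complex.Gamma (μ : ℂ) / (z + (b : ℂ) - 1) ^ (μ : ℂ) := by
    have h1w : 1 - w = ((b⁻¹ : ℝ) : ℂ) * (z + (b : ℂ) - 1) := by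
      rw [hwdef]
      push_cast
      field_simp
      ring
    rw [h1w, LaplaceRising.ofReal_mul_cpow (inv_pos.mpr hb) hu]
    have hargb : (b : ℂ).arg ≠ Real.pi := by
      rw [Complex.arg_ofReal_of_nonneg hb.le]
      exact Real.pi_ne_zero.symm
    have hbinv : (((b⁻¹ : ℝ) : ℂ)) ^ (-(μ : ℂ)) = (b : ℂ) ^ (μ : ℂ) := by
      push_cast
      rw [Complex.inv_cpow _ _ hargb, Complex.cpow_neg, inv_inv]
    have hbsub : (b : ℂ) ^ ((μ : ℂ) - 1) = (b : ℂ) ^ (μ : ℂ) / (b : ℂ) := by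
      rw [Complex.cpow_sub _ _ hbC, Complex.cpow_one]
    rw [hbinv, hbsub, Complex.cpow_neg (z + (b : ℂ) - 1)]
    field_simp
  rw [hval] at H
  exact H
end

section
/- The nabla discrete Laplace transform takes convolution to product: for functions f, g defined on ℕ_a, (K_a(f * g))(s) = (K_a f)(s) · (K_a g)(s), whenever both transforms converge absolutely. -/
/-- The nabla discrete convolution of `f, g : ℕ_a → ℝ` (as sequences, `f j = f(a+j)`):
`(f * g)(v) = ∑_{s=a+1}^{v} g(v - s + 1 + a) f(s)`, at the point `v = a + m`. -/
def nablaConv (f g : ℕ → ℝ) (m : ℕ) : ℝ :=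
  ∑ j ∈ Finset.Icc 1 m, g (m - j + 1) * f j

/-- The nabla discrete Laplace transform takes convolution to product:
`(K_a(f * g))(z) = (K_a f)(z) · (K_a g)(z)` whenever both transforms converge
absolutely. Here `(K_a f)(z) = ∑_{t=a+1}^∞ (1-z)^{t-a-1} f(t)`, with `t = a + n + 1`. -/
theorem laplace_nablaConv (z : ℝ) (f g : ℕ → ℝ)
    (hf : Summable (fun n : ℕ => |(1 - z) ^ n * f (n + 1)|))
    (hg : Summable (fun n : ℕ => |(1 - z) ^ n * g (n + 1)|)) :
    (∑' n : ℕ, (1 - z) ^ n * nablaConv f g (n + 1))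
      = (∑' n : ℕ, (1 - z) ^ n * f (n + 1)) * (∑' n : ℕ, (1 - z) ^ n * g (n + 1)) := by
  have hf' : Summable fun n : ℕ => ‖(1 - z) ^ n * f (n + 1)‖ := by
    simpa only [Real.norm_eq_abs] using hf
  have hg' : Summable fun n : ℕ => ‖(1 - z) ^ n * g (n + 1)‖ := by
    simpa only [Real.norm_eq_abs] using hg
  rw [tsum_mul_tsum_eq_tsum_sum_range_of_summable_norm hf' hg']
  congr 1
  ext n
  rw [nablaConv, Finset.mul_sum]
  rw [← Finset.sum_bij (fun (k : ℕ) _ => k + 1)]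
  · intro k hk
    simp only [Finset.mem_range] at hk
    simp only [Finset.mem_Icc]
    omega
  · intro k hk l hl h
    omega
  · intro j hj
    simp only [Finset.mem_Icc] at hj
    exact ⟨j - 1, by simp only [Finset.mem_range]; omega, by omega⟩
  · intro k hk
    simp only [Finset.mem_range] at hk
    have h1 : n + 1 - (k + 1) + 1 = n - k + 1 := by omega
    rw [h1]
    have h2 : (1 - z) ^ n = (1 - z) ^ k * (1 - z) ^ (n - k) := by
      rw [← pow_add]; congr 1; omega
    rw [h2]; ring
end

section
/- The summation of the two-parameter discrete Mittag-Leffler function satisfies ∑_{t=a+1}^{v} E_{\overline{α,β}}(λ, t-a) = E_{\overline{α,β+1}}(λ, v-a). -/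
/-- One-parameter nabla discrete Mittag-Leffler function
`E_α‾(λ, v) = ∑_{k} λ^k v^{kα}‾ / Γ(kα+1)`. -/
noncomputable def mlOne (α lam v : ℝ) : ℝ :=
  ∑' k : ℕ, lam ^ k * rising v ((k : ℝ) * α) / Real.Gamma ((k : ℝ) * α + 1)

/-- Two-parameter nabla discrete Mittag-Leffler function
`E_{α,β}‾(λ, v) = ∑_{k} λ^k v^(kα+β-1)‾ / Γ(kα+β)`. -/
noncomputable def mlTwo (α β lam v : ℝ) : ℝ :=
  ∑' k : ℕ, lam ^ k * rising v ((k : ℝ) * α + β - 1) / Real.Gamma ((k : ℝ) * α + β)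


lemma rising_eq_s13 (x mu : ℝ) (hx : 0 < x) :
    rising x mu = Real.Gamma (x + mu) / Real.Gamma x := by
  unfold rising
  split_ifs with h
  · rw [h, add_zero, div_self (Real.Gamma_pos_of_pos hx).ne']
  · rfl

lemma gamma_prod (m : ℝ) (hm : 0 < m) (d : ℕ) :
    Real.Gamma (m + d) = (∏ i ∈ Finset.range d, (m + i)) * Real.Gamma m := by
  induction d with
  | zero => simp
  | succ d ih =>
    have hmd : (0:ℝ) < m + d := by positivity
    rw [show (m + ((d:ℕ)+1:ℕ)) = (m + d) + 1 by push_cast; ring,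
      Real.Gamma_add_one hmd.ne', ih, Finset.prod_range_succ]
    ring

lemma telescope (μ : ℝ) (hμ : 0 < μ) (n : ℕ) :
    ∑ j ∈ Finset.Icc 1 n, rising (j : ℝ) (μ - 1) / Real.Gamma μ
      = rising (n : ℝ) μ / Real.Gamma (μ + 1) := by
  induction n with
  | zero =>
    simp only [Nat.cast_zero]
    rw [rising, if_neg hμ.ne', Real.Gamma_zero, div_zero, zero_div]
    simp
  | succ n ih =>
    rw [Finset.sum_Icc_succ_top (by omega : 1 ≤ n + 1), ih]
    have hΓμ := Real.Gamma_pos_of_pos hμ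
    have hΓμ1 := Real.Gamma_pos_of_pos (by linarith : (0:ℝ) < μ + 1)
    rcases Nat.eq_zero_or_pos n with hn | hn
    · subst hn
      rw [show ((0:ℕ):ℝ) = (0:ℝ) by norm_num, rising, if_neg hμ.ne',
        Real.Gamma_zero, div_zero, zero_div, zero_add]
      rw [show (((0:ℕ)+1:ℕ):ℝ) = (1:ℝ) by norm_num,
        rising_eq_s13 1 (μ-1) one_pos, rising_eq_s13 1 μ one_pos,
        show (1:ℝ) + (μ - 1) = μ by ring, Real.Gamma_one,
        show (1:ℝ) + μ = μ + 1 by ring]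
      field_simp
    · have hn' : (0:ℝ) < n := by exact_mod_cast hn
      have hΓn := Real.Gamma_pos_of_pos hn'
      have hnμ : (0:ℝ) < n + μ := by linarith
      have hΓnμ := Real.Gamma_pos_of_pos hnμ
      have h1 : ((n+1:ℕ):ℝ) = (n:ℝ) + 1 := by push_cast; ring
      rw [h1, rising_eq_s13 ((n:ℝ)+1) (μ-1) (by linarith), rising_eq_s13 ((n:ℝ)+1) μ (by linarith),
        rising_eq_s13 (n:ℝ) μ hn',
        show ((n:ℝ) + 1 + (μ - 1)) = (n:ℝ) + μ by ring,
        show ((n:ℝ) + 1 + μ) = ((n:ℝ) + μ) + 1 by ring,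
        Real.Gamma_add_one hnμ.ne',
        show ((n:ℝ) + 1) = (n:ℝ) + 1 from rfl,
        Real.Gamma_add_one hμ.ne']
      have hΓn1 : Real.Gamma ((n:ℝ) + 1) = n * Real.Gamma n :=
        Real.Gamma_add_one hn'.ne'
      rw [hΓn1]
      field_simp

lemma aux_sum (r : ℝ) (hr : |r| < 1) (d : ℕ) :
    Summable (fun k : ℕ => ((k:ℝ) + 1) ^ d * r ^ k) := by
  have hr' : ‖r‖ < 1 := by rwa [Real.norm_eq_abs]
  have hs : Summable (fun k : ℕ =>
      ∑ i ∈ Finset.range (d + 1), ((k:ℝ) ^ i * 1 ^ (d - i) * (d.choose i)) * r ^ k) := by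
    apply summable_sum
    intro i _
    have := summable_pow_mul_geometric_of_norm_lt_one (R := ℝ) i hr'
    apply Summable.congr (this.mul_right ((d.choose i : ℝ)))
    intro k; ring
  apply hs.congr
  intro k
  rw [← Finset.sum_mul, ← add_pow]

lemma summable_term (α β lam : ℝ) (hα : 0 < α) (hβ : 0 < β) (hlam : |lam| < 1)
    (j : ℕ) (hj : 1 ≤ j) :
    Summable (fun k : ℕ =>
      lam ^ k * rising (j:ℝ) ((k:ℝ) * α + β - 1) / Real.Gamma ((k:ℝ) * α + β)) := by
  set d := j - 1 with hd
  have hjd : (j:ℝ) = (d:ℝ) + 1 := by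
    have : j = d + 1 := by omega
    rw [this]; push_cast; ring
  have hj' : (0:ℝ) < j := by exact_mod_cast hj
  have hΓj := Real.Gamma_pos_of_pos hj'
  have hterm : ∀ k : ℕ,
      lam ^ k * rising (j:ℝ) ((k:ℝ) * α + β - 1) / Real.Gamma ((k:ℝ) * α + β)
        = (Real.Gamma (j:ℝ))⁻¹ *
            (lam ^ k * ∏ i ∈ Finset.range d, ((k:ℝ) * α + β + i)) := by
    intro k
    have hm : 0 < (k:ℝ) * α + β := by positivity
    have hΓm := Real.Gamma_pos_of_pos hm
    rw [rising_eq_s13 _ _ hj',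
      show ((j:ℝ) + ((k:ℝ) * α + β - 1)) = ((k:ℝ) * α + β) + (d:ℝ) by rw [hjd]; ring,
      gamma_prod _ hm d]
    field_simp
  have hb : Summable (fun k : ℕ => (α + β + d) ^ d * (((k:ℝ) + 1) ^ d * |lam| ^ k)) :=
    (aux_sum |lam| (by rwa [abs_abs]) d).mul_left _
  have hg : Summable (fun k : ℕ =>
      lam ^ k * ∏ i ∈ Finset.range d, ((k:ℝ) * α + β + i)) := by
    apply Summable.of_norm_bounded hb
    intro k
    have hnn : ∀ i ∈ Finset.range d, (0:ℝ) ≤ (k:ℝ) * α + β + i := by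
      intro i _; positivity
    have hprodnn : (0:ℝ) ≤ ∏ i ∈ Finset.range d, ((k:ℝ) * α + β + i) :=
      Finset.prod_nonneg hnn
    rw [Real.norm_eq_abs, abs_mul, abs_pow, abs_of_nonneg hprodnn]
    have hle : ∏ i ∈ Finset.range d, ((k:ℝ) * α + β + i)
        ≤ ∏ _i ∈ Finset.range d, ((α + β + d) * ((k:ℝ) + 1)) := by
      apply Finset.prod_le_prod hnn
      intro i hi
      have hi' : (i:ℝ) ≤ d := by
        have := Finset.mem_range.mp hi
        exact_mod_cast this.le
      have hk : (0:ℝ) ≤ k := Nat.cast_nonneg k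
      nlinarith
    calc |lam| ^ k * ∏ i ∈ Finset.range d, ((k:ℝ) * α + β + i)
        ≤ |lam| ^ k * ∏ _i ∈ Finset.range d, ((α + β + d) * ((k:ℝ) + 1)) := by
          apply mul_le_mul_of_nonneg_left hle (by positivity)
      _ = (α + β + d) ^ d * (((k:ℝ) + 1) ^ d * |lam| ^ k) := by
          rw [Finset.prod_const, Finset.card_range, mul_pow]; ring
  exact (hg.mul_left _).congr fun k => (hterm k).symm

/-- Summation of the two-parameter discrete Mittag-Leffler function:
`∑_{t=a+1}^{v} E_{α,β}‾(λ, t-a) = E_{α,β+1}‾(λ, v-a)`, where `t - a = j` and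
`v - a = n`. -/
theorem sum_mlTwo (α β lam : ℝ) (hα : 0 < α) (hβ : 0 < β) (hlam : |lam| < 1) (n : ℕ) :
    (∑ j ∈ Finset.Icc 1 n, mlTwo α β lam (j : ℝ)) = mlTwo α (β + 1) lam (n : ℝ) := by
  have hsum : ∀ j ∈ Finset.Icc 1 n, Summable (fun k : ℕ =>
      lam ^ k * rising (j:ℝ) ((k:ℝ) * α + β - 1) / Real.Gamma ((k:ℝ) * α + β)) :=
    fun j hj => summable_term α β lam hα hβ hlam j (Finset.mem_Icc.mp hj).1
  unfold mlTwo
  rw [← Summable.tsum_finsetSum hsum]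
  apply tsum_congr
  intro k
  have hμ : 0 < (k:ℝ) * α + β := by positivity
  have hfac : ∑ j ∈ Finset.Icc 1 n,
      lam ^ k * rising (j:ℝ) ((k:ℝ) * α + β - 1) / Real.Gamma ((k:ℝ) * α + β)
        = lam ^ k * ∑ j ∈ Finset.Icc 1 n,
            rising (j:ℝ) (((k:ℝ) * α + β) - 1) / Real.Gamma ((k:ℝ) * α + β) := by
    rw [Finset.mul_sum]
    exact Finset.sum_congr rfl fun j _ => by ring
  rw [hfac, telescope _ hμ n,
    show ((k:ℝ) * α + (β + 1) - 1) = (k:ℝ) * α + β by ring,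
    show ((k:ℝ) * α + (β + 1)) = ((k:ℝ) * α + β) + 1 by ring]
  ring
end

section
/- For n ∈ ℕ and α ∈ [0,1], the n-th iterate of the AB left fractional sum satisfies (ᴬᴮₐ∇^{-α})^n f(t) = ∑_{k=0}^{n} [C(n,k)(1-α)^{n-k} α^k / B(α)^n] · (ₐ∇^{-kα} f)(t), where C(n,k) is the binomial coefficient. -/
/-- The AB left fractional sum `(ᴬᴮₐ∇^{-α}f)(t) = ((1-α)/B) f(t) + (α/B)(ₐ∇^{-α}f)(t)`. -/
noncomputable def ABsum (B α : ℝ) (f : ℕ → ℝ) (t : ℕ) : ℝ :=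
  (1 - α) / B * f t + α / B * nablaSumL α f t

open Finset

/-- Auxiliary: `G x m = Γ(m + x) / m!`. -/
noncomputable def ABaux.G (x : ℝ) (m : ℕ) : ℝ := Real.Gamma ((m:ℝ) + x) / (m.factorial : ℝ)

namespace ABaux

lemma Grec (x : ℝ) (hx : 0 < x) (m : ℕ) :
    ((m:ℝ)+1) * G x (m+1) = ((m:ℝ)+x) * G x m := by
  have h1 : Real.Gamma ((m:ℝ)+1+x) = ((m:ℝ)+x) * Real.Gamma ((m:ℝ)+x) := by
    rw [show (m:ℝ)+1+x = ((m:ℝ)+x)+1 by ring, Real.Gamma_add_one (by positivity)]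
  have h2 : ((m+1).factorial : ℝ) = ((m:ℝ)+1) * m.factorial := by
    push_cast [Nat.factorial_succ]; ring
  have hf : (m.factorial : ℝ) ≠ 0 := by positivity
  simp only [G]
  push_cast
  rw [h1, h2]
  field_simp

lemma gamma_conv (α μ : ℝ) (hα : 0 < α) (hμ : 0 < μ) (N : ℕ) :
    ∑ i ∈ range (N+1), G α (N-i) * G μ i
      = Real.Gamma α * Real.Gamma μ / Real.Gamma (α+μ) * G (α+μ) N := by
  have hne : Real.Gamma (α+μ) ≠ 0 := (Real.Gamma_pos_of_pos (by positivity)).ne'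
  induction N with
  | zero =>
      simp [G]
      field_simp
  | succ N ih =>
      have key : ((N:ℝ)+1) * ∑ i ∈ range (N+2), G α (N+1-i) * G μ i
          = ((N:ℝ)+α+μ) * ∑ i ∈ range (N+1), G α (N-i) * G μ i := by
        have split : ((N:ℝ)+1) * ∑ i ∈ range (N+2), G α (N+1-i) * G μ i
            = (∑ i ∈ range (N+2), ((N+1-i:ℕ):ℝ) * G α (N+1-i) * G μ i)
              + (∑ i ∈ range (N+2), (i:ℝ) * (G α (N+1-i) * G μ i)) := by
          rw [Finset.mul_sum, ← Finset.sum_add_distrib]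
          refine Finset.sum_congr rfl fun i hi => ?_
          have hi' : i ≤ N+1 := by simpa [Nat.lt_succ_iff] using Finset.mem_range.mp hi
          have : ((N+1-i:ℕ):ℝ) = (N:ℝ)+1-(i:ℝ) := by
            push_cast [Nat.cast_sub (by omega : i ≤ N+1)]; ring
          rw [this]; ring
        have hS2 : (∑ i ∈ range (N+2), (i:ℝ) * (G α (N+1-i) * G μ i))
            = ∑ i ∈ range (N+1), ((i:ℝ)+μ) * (G α (N-i) * G μ i) := by
          rw [Finset.sum_range_succ']
          simp only [Nat.cast_zero, zero_mul, add_zero]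
          refine Finset.sum_congr rfl fun i hi => ?_
          have h : N+1-(i+1) = N-i := by omega
          rw [h]
          push_cast
          linear_combination G α (N-i) * Grec μ hμ i
        have hS1 : (∑ i ∈ range (N+2), ((N+1-i:ℕ):ℝ) * G α (N+1-i) * G μ i)
            = ∑ i ∈ range (N+1), (((N-i:ℕ):ℝ)+α) * (G α (N-i) * G μ i) := by
          rw [Finset.sum_range_succ]
          simp only [Nat.sub_self, Nat.cast_zero, zero_mul]
          rw [add_zero]
          refine Finset.sum_congr rfl fun i hi => ?_
          have hi' : i ≤ N := by simpa [Nat.lt_succ_iff] using Finset.mem_range.mp hi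
          have h : N+1-i = (N-i)+1 := by omega
          rw [h]
          push_cast
          linear_combination G μ i * Grec α hα (N-i)
        rw [split, hS1, hS2, ← Finset.sum_add_distrib, Finset.mul_sum]
        refine Finset.sum_congr rfl fun i hi => ?_
        have hi' : i ≤ N := by simpa [Nat.lt_succ_iff] using Finset.mem_range.mp hi
        have : ((N-i:ℕ):ℝ) = (N:ℝ)-(i:ℝ) := by push_cast [Nat.cast_sub hi']; ring
        rw [this]; ring
      have hrec : ((N:ℝ)+1) * G (α+μ) (N+1) = ((N:ℝ)+α+μ) * G (α+μ) N := by
        have := Grec (α+μ) (by positivity) N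
        linarith [this]
      have hN1 : ((N:ℝ)+1) ≠ 0 := by positivity
      have : ((N:ℝ)+1) * ∑ i ∈ range (N+2), G α (N+1-i) * G μ i
          = ((N:ℝ)+1) * (Real.Gamma α * Real.Gamma μ / Real.Gamma (α+μ) * G (α+μ) (N+1)) := by
        rw [key, ih]
        rw [show ((N:ℝ)+1) * (Real.Gamma α * Real.Gamma μ / Real.Gamma (α+μ) * G (α+μ) (N+1))
            = Real.Gamma α * Real.Gamma μ / Real.Gamma (α+μ) * (((N:ℝ)+1) * G (α+μ) (N+1)) by ring,
          hrec]
        ring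
      exact mul_left_cancel₀ hN1 this

lemma rising_nat (m : ℕ) (x : ℝ) :
    rising ((m:ℝ)+1) (x-1) = G x m := by
  unfold rising G
  have hfac : Real.Gamma ((m:ℝ)+1) = (m.factorial : ℝ) := Real.Gamma_nat_eq_factorial m
  by_cases h : x - 1 = 0
  · rw [if_pos h]
    have : x = 1 := by linarith [sub_eq_zero.mp h]
    rw [this]
    rw [hfac]
    have : (m.factorial : ℝ) ≠ 0 := by positivity
    field_simp
  · rw [if_neg h, hfac]
    ring_nf

lemma nablaSumL_nablaSumL (α μ : ℝ) (hα : 0 < α) (hμ : 0 < μ) (f : ℕ → ℝ) (n : ℕ) :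
    nablaSumL α (fun m => nablaSumL μ f m) n = nablaSumL (α+μ) f n := by
  have hΓα : Real.Gamma α ≠ 0 := (Real.Gamma_pos_of_pos hα).ne'
  have hΓμ : Real.Gamma μ ≠ 0 := (Real.Gamma_pos_of_pos hμ).ne'
  have hΓ : Real.Gamma (α+μ) ≠ 0 := (Real.Gamma_pos_of_pos (by positivity)).ne'
  unfold nablaSumL
  rw [if_neg hα.ne', if_neg (by positivity : α + μ ≠ 0)]
  simp only [if_neg hμ.ne']
  set c : ℝ := Real.Gamma α * Real.Gamma μ / Real.Gamma (α+μ) with hc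
  have step2 : ∀ j ∈ Finset.Icc 1 n,
      (∑ s ∈ Finset.Icc j n, rising ((n:ℝ)-(s:ℝ)+1) (α-1) * rising ((s:ℝ)-(j:ℝ)+1) (μ-1))
        = c * G (α+μ) (n-j) := by
    intro j hj
    obtain ⟨hj1, hjn⟩ := Finset.mem_Icc.mp hj
    rw [show Finset.Icc j n = Finset.Ico j (n+1) by rw [Finset.Ico_add_one_right_eq_Icc],
      Finset.sum_Ico_eq_sum_range]
    have hN : n + 1 - j = (n-j)+1 := by omega
    rw [hN, ← gamma_conv α μ hα hμ (n-j)]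
    refine Finset.sum_congr rfl fun i hi => ?_
    have hi' : i ≤ n - j := by simpa [Nat.lt_succ_iff] using Finset.mem_range.mp hi
    have e1 : (n:ℝ) - ((j+i:ℕ):ℝ) + 1 = ((n-j-i:ℕ):ℝ) + 1 := by
      have : ((n-j-i:ℕ):ℝ) = (n:ℝ) - (j:ℝ) - (i:ℝ) := by
        push_cast [Nat.cast_sub (by omega : i ≤ n - j), Nat.cast_sub hjn]; ring
      rw [this]; push_cast; ring
    have e2 : ((j+i:ℕ):ℝ) - (j:ℝ) + 1 = ((i:ℕ):ℝ) + 1 := by push_cast; ring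
    rw [e1, e2, rising_nat, rising_nat]
  have hswap : ∑ s ∈ Finset.Icc 1 n, ∑ j ∈ Finset.Icc 1 s,
        rising ((n:ℝ)-(s:ℝ)+1) (α-1) * rising ((s:ℝ)-(j:ℝ)+1) (μ-1) * f j
      = ∑ j ∈ Finset.Icc 1 n, ∑ s ∈ Finset.Icc j n,
        rising ((n:ℝ)-(s:ℝ)+1) (α-1) * rising ((s:ℝ)-(j:ℝ)+1) (μ-1) * f j :=
    Finset.sum_comm' (by intro s j; simp only [Finset.mem_Icc]; omega)
  have hL : (∑ s ∈ Finset.Icc 1 n, rising ((n:ℝ)-(s:ℝ)+1) (α-1) *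
        ((1 / Real.Gamma μ) * ∑ j ∈ Finset.Icc 1 s, rising ((s:ℝ)-(j:ℝ)+1) (μ-1) * f j))
      = (1 / Real.Gamma μ) * (c * ∑ j ∈ Finset.Icc 1 n, G (α+μ) (n-j) * f j) := by
    have e : ∀ s : ℕ, rising ((n:ℝ)-(s:ℝ)+1) (α-1) *
        ((1 / Real.Gamma μ) * ∑ j ∈ Finset.Icc 1 s, rising ((s:ℝ)-(j:ℝ)+1) (μ-1) * f j)
        = (1 / Real.Gamma μ) * ∑ j ∈ Finset.Icc 1 s,
            rising ((n:ℝ)-(s:ℝ)+1) (α-1) * rising ((s:ℝ)-(j:ℝ)+1) (μ-1) * f j := by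
      intro s
      rw [Finset.mul_sum, Finset.mul_sum]
      rw [Finset.mul_sum]
      refine Finset.sum_congr rfl fun j _ => by ring
    simp only [e]
    rw [← Finset.mul_sum, hswap]
    congr 1
    rw [Finset.mul_sum]
    refine Finset.sum_congr rfl fun j hj => ?_
    rw [← Finset.sum_mul, step2 j hj]
    ring
  rw [hL]
  have hR : (∑ j ∈ Finset.Icc 1 n, rising ((n:ℝ)-(j:ℝ)+1) (α+μ-1) * f j)
      = ∑ j ∈ Finset.Icc 1 n, G (α+μ) (n-j) * f j := by
    refine Finset.sum_congr rfl fun j hj => ?_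
    obtain ⟨hj1, hjn⟩ := Finset.mem_Icc.mp hj
    have : (n:ℝ)-(j:ℝ)+1 = ((n-j:ℕ):ℝ)+1 := by
      push_cast [Nat.cast_sub hjn]; ring
    rw [this, rising_nat]
  rw [hR, hc]
  field_simp

lemma nablaSumL_finsum {ι : Type*} (μ : ℝ) (s : Finset ι) (c : ι → ℝ) (h : ι → ℕ → ℝ)
    (n : ℕ) : nablaSumL μ (fun m => ∑ k ∈ s, c k * h k m) n
      = ∑ k ∈ s, c k * nablaSumL μ (h k) n := by
  unfold nablaSumL
  by_cases hμ : μ = 0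
  · simp [hμ]
  · simp only [if_neg hμ, Finset.mul_sum]
    rw [Finset.sum_comm]
    exact Finset.sum_congr rfl fun k _ => Finset.sum_congr rfl fun j _ => by ring

lemma succ_step (α : ℝ) (hα : 0 < α) (k : ℕ) (f : ℕ → ℝ) (t : ℕ) :
    nablaSumL α (fun m => nablaSumL ((k:ℝ)*α) f m) t
      = nablaSumL (((k+1:ℕ):ℝ)*α) f t := by
  cases k with
  | zero =>
      norm_num
      rw [show (fun m => nablaSumL 0 f m) = f from funext fun m => by simp [nablaSumL]]
  | succ k =>
      have hμ : (0:ℝ) < ((k+1:ℕ):ℝ)*α := by positivity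
      rw [nablaSumL_nablaSumL α _ hα hμ f t]
      congr 1
      push_cast
      ring

lemma coeffPascal (α Bv : ℝ) (hB : Bv ≠ 0) (n k : ℕ) (hk : k ≤ n+1) :
    (((n+1).choose k : ℝ) * (1-α)^(n+1-k) * α^k / Bv^(n+1))
    = (1-α)/Bv * ((n.choose k : ℝ) * (1-α)^(n-k) * α^k / Bv^n)
      + (if k = 0 then 0
         else α/Bv * ((n.choose (k-1) : ℝ) * (1-α)^(n-(k-1)) * α^(k-1) / Bv^n)) := by
  match k with
  | 0 =>
      simp only [if_pos rfl, ↓reduceIte, Nat.choose_zero_right, Nat.cast_one, Nat.sub_zero, pow_zero,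
        add_zero]
      rw [pow_succ (1-α) n, pow_succ Bv n]
      field_simp
  | (j+1) =>
      rw [if_neg (Nat.succ_ne_zero j)]
      simp only [Nat.add_sub_cancel]
      rcases Nat.lt_or_ge j n with hj | hj
      · have h1 : n+1-(j+1) = n - j := by omega
        have h2 : n - (j+1) = (n-j) - 1 := by omega
        rw [h1, h2, Nat.choose_succ_succ]
        push_cast
        have h3 : (1-α) * (1-α)^(n-j-1) = (1-α)^(n-j) := by
          rw [← pow_succ']
          congr 1
          omega
        rw [pow_succ Bv n]
        field_simp
        rw [← h3]
        ring
      · have hj' : j = n := by omega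
        subst hj'
        simp [Nat.choose_succ_self, Nat.choose_self]
        rw [pow_succ Bv j, pow_succ α j]
        field_simp

end ABaux

/-- The `n`-th iterate of the AB left fractional sum satisfies
`(ᴬᴮₐ∇^{-α})^n f(t) = ∑_{k=0}^{n} [C(n,k)(1-α)^{n-k} α^k / B^n] (ₐ∇^{-kα}f)(t)`. -/
theorem ABsum_iterate (B α : ℝ) (hB : 0 < B) (hα : α ∈ Set.Icc (0:ℝ) 1)
    (n : ℕ) (f : ℕ → ℝ) (t : ℕ) :
    (ABsum B α)^[n] f t
      = ∑ k ∈ Finset.range (n + 1),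
          ((n.choose k : ℝ) * (1 - α) ^ (n - k) * α ^ k / B ^ n) *
            nablaSumL ((k : ℝ) * α) f t := by
  obtain ⟨hα0, hα1⟩ := hα
  rcases eq_or_lt_of_le hα0 with h0 | hpos
  · -- α = 0
    subst h0
    have hiter : ∀ m : ℕ, (ABsum B 0)^[m] f t = f t / B ^ m := by
      intro m
      induction m with
      | zero => simp
      | succ m ih =>
          rw [Function.iterate_succ_apply']
          simp only [ABsum, nablaSumL, if_pos rfl, sub_zero, zero_div, zero_mul, add_zero]
          rw [ih, pow_succ B m]
          ring
    rw [hiter n]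
    rw [Finset.sum_eq_single 0]
    · simp [nablaSumL]
      ring
    · intro b _ hb
      simp [zero_pow hb]
    · intro h
      simp at h
  · -- α > 0
    induction n generalizing t with
    | zero => simp [nablaSumL]
    | succ n ih =>
        rw [Function.iterate_succ_apply']
        have hg : (ABsum B α)^[n] f = fun s => ∑ k ∈ Finset.range (n+1),
            ((n.choose k : ℝ) * (1 - α) ^ (n - k) * α ^ k / B ^ n) *
              nablaSumL ((k : ℝ) * α) f s := funext fun s => ih s
        rw [ABsum, hg]
        rw [ABaux.nablaSumL_finsum]
        simp only [ABaux.succ_step α hpos]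
        -- binomial algebra
        have h1 : (1-α)/B * (∑ k ∈ Finset.range (n+1),
              ((n.choose k : ℝ) * (1 - α) ^ (n - k) * α ^ k / B ^ n) *
                nablaSumL ((k : ℝ) * α) f t)
            = ∑ k ∈ Finset.range (n+2), (1-α)/B *
              (((n.choose k : ℝ) * (1 - α) ^ (n - k) * α ^ k / B ^ n) *
                nablaSumL ((k : ℝ) * α) f t) := by
          conv_rhs => rw [Finset.sum_range_succ]
          rw [Nat.choose_succ_self]
          push_cast
          rw [Finset.mul_sum]
          ring
        have h2 : α/B * (∑ k ∈ Finset.range (n+1),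
              ((n.choose k : ℝ) * (1 - α) ^ (n - k) * α ^ k / B ^ n) *
                nablaSumL (((k+1:ℕ):ℝ) * α) f t)
            = ∑ k ∈ Finset.range (n+2), (if k = 0 then 0 else α/B *
              (((n.choose (k-1) : ℝ) * (1 - α) ^ (n - (k-1)) * α ^ (k-1) / B ^ n) *
                nablaSumL ((k : ℝ) * α) f t)) := by
          conv_rhs => rw [Finset.sum_range_succ']
          simp only [if_neg (Nat.succ_ne_zero _), reduceIte, Nat.add_sub_cancel, add_zero]
          rw [Finset.mul_sum]
        rw [h1, h2, ← Finset.sum_add_distrib]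
        refine (Finset.sum_congr rfl fun k hk => ?_).symm
        have hk' : k ≤ n+1 := by simpa [Nat.lt_succ_iff] using Finset.mem_range.mp hk
        have hc := ABaux.coeffPascal α B hB.ne' n k hk'
        by_cases hk0 : k = 0
        · subst hk0
          simp only [reduceIte, if_pos rfl, add_zero] at hc ⊢
          rw [hc]
          ring
        · simp only [if_neg hk0] at hc ⊢
          rw [hc]
          ring
end

section
/- Integration by parts for nabla fractional sums: for α > 0 and a < b with a ≡ b mod 1, and functions f on ℕ_a, g on _bℕ, we have ∑_{s=a+1}^{b-1} g(s)·(ₐ∇^{-α}f)(s) = ∑_{s=a+1}^{b-1} f(s)·(∇_b^{-α}g)(s). -/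
/-- Integration by parts for nabla fractional sums: for `α > 0` and `a < b` with
`b - a = N ∈ ℕ`, functions `f` on `ℕ_a` (sequence `f j = f(a+j)`) and `g` on
`_bℕ` (sequence `g i = g(b-i)`, so `g(a+j) = g (N-j)` as sequences):
`∑_{s=a+1}^{b-1} g(s) (ₐ∇^{-α}f)(s) = ∑_{s=a+1}^{b-1} f(s) (∇_b^{-α}g)(s)`. -/
theorem nablaSum_by_parts (α : ℝ) (hα : 0 < α) (N : ℕ) (hN : 1 ≤ N) (f g : ℕ → ℝ) :
    (∑ j ∈ Finset.Icc 1 (N - 1), g (N - j) * nablaSumL α f j)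
      = ∑ j ∈ Finset.Icc 1 (N - 1), f j * nablaSumR α g (N - j) := by

  have hα0 : α ≠ 0 := ne_of_gt hα
  simp only [nablaSumL, nablaSumR, if_neg hα0]
  set c := 1 / Real.Gamma α with hc
  have L : (∑ j ∈ Finset.Icc 1 (N - 1), g (N - j) *
      (c * ∑ k ∈ Finset.Icc 1 j, rising ((j : ℝ) - (k : ℝ) + 1) (α - 1) * f k))
      = c * ∑ j ∈ Finset.Icc 1 (N - 1), ∑ k ∈ Finset.Icc 1 j,
          rising ((j : ℝ) - (k : ℝ) + 1) (α - 1) * f k * g (N - j) := by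
    simp only [Finset.mul_sum]
    refine Finset.sum_congr rfl fun j _ => Finset.sum_congr rfl fun k _ => by ring
  have R : (∑ j ∈ Finset.Icc 1 (N - 1), f j *
      (c * ∑ i ∈ Finset.Icc 1 (N - j), rising (((N - j : ℕ) : ℝ) - (i : ℝ) + 1) (α - 1) * g i))
      = c * ∑ j ∈ Finset.Icc 1 (N - 1), ∑ i ∈ Finset.Icc 1 (N - j),
          rising (((N - j : ℕ) : ℝ) - (i : ℝ) + 1) (α - 1) * g i * f j := by
    simp only [Finset.mul_sum]
    refine Finset.sum_congr rfl fun j _ => Finset.sum_congr rfl fun k _ => by ring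
  rw [L, R]
  congr 1
  rw [Finset.sum_comm' (s' := fun k => Finset.Icc k (N - 1)) (t' := Finset.Icc 1 (N - 1))
    (by intro j k; simp only [Finset.mem_Icc]; omega)]
  refine Finset.sum_congr rfl fun k hk => ?_
  simp only [Finset.mem_Icc] at hk
  refine Finset.sum_nbij' (fun j => N - j) (fun i => N - i) ?_ ?_ ?_ ?_ ?_
  · intro j hj; simp only [Finset.mem_Icc] at *; omega
  · intro i hi; simp only [Finset.mem_Icc] at *; omega
  · intro j hj; simp only [Finset.mem_Icc] at hj; show N - (N - j) = j; omega
  · intro i hi; simp only [Finset.mem_Icc] at hi; show N - (N - i) = i; omega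
  · intro j hj
    simp only [Finset.mem_Icc] at hj
    have h1 : ((N - k : ℕ) : ℝ) = (N : ℝ) - (k : ℝ) := by
      push_cast [Nat.cast_sub (by omega : k ≤ N)]; ring
    have h2 : ((N - j : ℕ) : ℝ) = (N : ℝ) - (j : ℝ) := by
      push_cast [Nat.cast_sub (by omega : j ≤ N)]; ring
    rw [h1, h2]
    ring_nf
end
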